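/- For q ≥ 1 and unit complex numbers z₁, z₂, the characteristic polynomial of the q×q matrix H = z₁U + z̄₁U* + z₂V + z̄₂V* (with U the cyclic shift and V = diag(ω^k), ω = e^{2πi p/q}, gcd(p,q) = 1) depends on (z₁, z₂) only through its constant term, which equals, up to sign, z₁^q + z₁^{−q} + z₂^q + z₂^{−q} plus a constant independent of z₁, z₂. -/

import Mathlib

open Matrix Polynomial Complex

lemma coeff_comp_C_mul_X (f : Polynomial ℂ) (a : ℂ) (n : ℕ) :
    (f.comp (C a * X)).coeff n = f.coeff n * a ^ n := by
  induction f using Polynomial.induction_on' with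
  | add p r hp hr => simp [add_comp, hp, hr, add_mul]
  | monomial k c =>
    rw [← C_mul_X_pow_eq_monomial, mul_comp, C_comp, X_pow_comp, mul_pow, ← C_pow,
      ← mul_assoc, ← C_mul]
    simp only [coeff_C_mul, coeff_X_pow]
    split_ifs with h
    · subst h; ring
    · simp

lemma natDegree_det_le' {q : ℕ} (A : Matrix (Fin q) (Fin q) (Polynomial ℂ)) (d : ℕ)
    (h : ∀ i j, (A i j).natDegree ≤ d) : A.det.natDegree ≤ q * d := by
  rw [Matrix.det_apply]
  apply Polynomial.natDegree_sum_le_of_forall_le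
  intro σ _
  have h1 : (∏ i, A (σ i) i).natDegree ≤ q * d := by
    refine le_trans (Polynomial.natDegree_prod_le _ _) ?_
    calc ∑ i, (A (σ i) i).natDegree ≤ ∑ _i : Fin q, d :=
          Finset.sum_le_sum (fun i _ => h _ _)
      _ = q * d := by simp [Finset.sum_const, mul_comm]
  rcases Int.units_eq_one_or (Equiv.Perm.sign σ) with hs | hs <;> rw [hs] <;> simpa

lemma tri_poly {q : ℕ} (hq : q ≠ 0) (f : Polynomial ℂ)
    (hdeg : f.natDegree ≤ 2 * q) (hsupp : ∀ n : ℕ, f.coeff n ≠ 0 → q ∣ n) :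
    f = C (f.coeff 0) + C (f.coeff q) * X ^ q + C (f.coeff (2 * q)) * X ^ (2 * q) := by
  have hc : ∀ n, n ≠ 0 → n ≠ q → n ≠ 2 * q → f.coeff n = 0 := by
    intro n h0 h1 h2
    by_contra hne
    obtain ⟨k, rfl⟩ := hsupp n hne
    have hk : 3 ≤ k := by
      rcases k with _ | _ | _ | k
      · omega
      · omega
      · omega
      · omega
    have hlt : 2 * q < q * k := by
      have : q * 3 ≤ q * k := Nat.mul_le_mul_left q hk
      have hq1 : 1 ≤ q := Nat.pos_of_ne_zero hq
      omega
    exact hne (Polynomial.coeff_eq_zero_of_natDegree_lt (lt_of_le_of_lt hdeg hlt))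
  ext n
  simp only [coeff_add, coeff_C, coeff_C_mul, coeff_X_pow]
  by_cases h0 : n = 0
  · subst h0
    rw [if_pos rfl, if_neg (by omega), if_neg (by omega)]
    ring
  · by_cases h1 : n = q
    · subst h1
      rw [if_neg (by omega), if_pos rfl, if_neg (by omega)]
      ring
    · by_cases h2 : n = 2 * q
      · subst h2
        rw [if_neg (by omega), if_neg (by omega), if_pos rfl]
        ring
      · rw [if_neg (by omega), if_neg (by omega), if_neg (by omega), hc n h0 h1 h2]
        ring

lemma charpoly_eval' {q : ℕ} (M : Matrix (Fin q) (Fin q) ℂ) (t : ℂ) :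
    M.charpoly.eval t = (t • (1 : Matrix (Fin q) (Fin q) ℂ) - M).det := by
  have := RingHom.map_det (Polynomial.evalRingHom t) (Matrix.charmatrix M)
  rw [Matrix.charpoly]
  rw [show Polynomial.eval t (Matrix.charmatrix M).det
      = (Polynomial.evalRingHom t) (Matrix.charmatrix M).det from rfl, this]
  congr 1
  ext i j
  by_cases h : i = j <;>
    simp [Matrix.charmatrix_apply, h, Matrix.one_apply, Matrix.diagonal_apply,
      Matrix.smul_apply, Matrix.sub_apply]

lemma key_lemma {q : ℕ} (hq : q ≠ 0) (ω : ℂ) (hωq : ω ^ q = 1)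
    (hprim : ∀ n : ℕ, ω ^ n = 1 → q ∣ n)
    (M K S S' : Matrix (Fin q) (Fin q) ℂ)
    (hS : S * S' = 1)
    (hSM : S * M * S' = ω • M)
    (hSM' : S * Mᴴ * S' = ω⁻¹ • Mᴴ)
    (hSK : S * K * S' = K)
    (hdM : M.det = (-1 : ℂ) ^ (q + 1)) (hdM' : Mᴴ.det = (-1 : ℂ) ^ (q + 1))
    (t : ℂ) :
    ∀ z : ℂ, z ≠ 0 →
      (t • (1 : Matrix (Fin q) (Fin q) ℂ) - (z • M + z⁻¹ • Mᴴ + K)).det + z ^ q + z⁻¹ ^ q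
        = (t • (1 : Matrix (Fin q) (Fin q) ℂ) - (M + Mᴴ + K)).det + 2 := by
  have hω0 : ω ≠ 0 := by
    intro h; rw [h, zero_pow hq] at hωq; exact zero_ne_one hωq
  set H : ℂ → Matrix (Fin q) (Fin q) ℂ := fun z => z • M + z⁻¹ • Mᴴ + K with hH
  set f : ℂ → ℂ := fun z => (t • (1 : Matrix (Fin q) (Fin q) ℂ) - H z).det with hf
  -- conjugation invariance
  have hinv : ∀ z : ℂ, f (ω * z) = f z := by
    intro z
    by_cases hz : z = 0
    · subst hz; rw [mul_zero]
    · have e0 : S * (t • (1 : Matrix (Fin q) (Fin q) ℂ)) * S'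
          = t • (1 : Matrix (Fin q) (Fin q) ℂ) := by
        rw [mul_smul_comm, smul_mul_assoc, mul_one, hS]
      have e1 : S * (z • M) * S' = (ω * z) • M := by
        rw [mul_smul_comm, smul_mul_assoc, hSM, smul_smul, mul_comm z ω]
      have e2 : S * (z⁻¹ • Mᴴ) * S' = (ω * z)⁻¹ • Mᴴ := by
        rw [mul_smul_comm, smul_mul_assoc, hSM', smul_smul, _root_.mul_inv_rev]
      have h1 : S * (t • (1 : Matrix (Fin q) (Fin q) ℂ) - H z) * S'
          = t • (1 : Matrix (Fin q) (Fin q) ℂ) - H (ω * z) := by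
        show S * (t • (1 : Matrix (Fin q) (Fin q) ℂ) - (z • M + z⁻¹ • Mᴴ + K)) * S'
          = t • (1 : Matrix (Fin q) (Fin q) ℂ) - ((ω * z) • M + (ω * z)⁻¹ • Mᴴ + K)
        simp only [mul_sub, sub_mul, mul_add, add_mul]
        rw [e0, e1, e2, hSK]
      have hdet : (S * (t • (1 : Matrix (Fin q) (Fin q) ℂ) - H z) * S').det = f z := by
        rw [Matrix.det_mul, Matrix.det_mul]
        have hss : S.det * S'.det = 1 := by rw [← Matrix.det_mul, hS, Matrix.det_one]
        calc S.det * (t • (1 : Matrix (Fin q) (Fin q) ℂ) - H z).det * S'.det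
            = (t • (1 : Matrix (Fin q) (Fin q) ℂ) - H z).det * (S.det * S'.det) := by ring
          _ = f z := by rw [hss, mul_one]
      have hfz : f (ω * z) = (t • (1 : Matrix (Fin q) (Fin q) ℂ) - H (ω * z)).det := rfl
      rw [hfz, ← h1, hdet]
  -- the polynomial F
  set A : Matrix (Fin q) (Fin q) (Polynomial ℂ) := Matrix.of fun i j =>
    C t * X * (if i = j then 1 else 0)
      - (X ^ 2 * C (M i j) + C (Mᴴ i j) + X * C (K i j)) with hA
  set F := A.det with hF
  have hevalF : ∀ w : ℂ, F.eval w = (A.map (Polynomial.eval w)).det := by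
    intro w
    rw [hF, show Polynomial.eval w A.det = (Polynomial.evalRingHom w) A.det from rfl,
      RingHom.map_det]
    rfl
  have hFw : ∀ w : ℂ, w ≠ 0 → F.eval w = w ^ q * f w := by
    intro w hw
    rw [hevalF]
    have hmap : A.map (Polynomial.eval w)
        = w • (t • (1 : Matrix (Fin q) (Fin q) ℂ) - H w) := by
      show A.map (Polynomial.eval w)
        = w • (t • (1 : Matrix (Fin q) (Fin q) ℂ) - (w • M + w⁻¹ • Mᴴ + K))
      ext i j
      simp only [hA, Matrix.map_apply, Matrix.of_apply, Matrix.smul_apply,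
        Matrix.sub_apply, Matrix.add_apply, Matrix.one_apply, smul_eq_mul]
      rw [eval_sub, eval_mul, eval_mul, eval_C, eval_X, eval_add, eval_add, eval_mul,
        eval_pow, eval_X, eval_C, eval_C, eval_mul, eval_X, eval_C]
      split_ifs with h
      · rw [eval_one]; field_simp
      · rw [eval_zero]; field_simp
    rw [hmap, Matrix.det_smul, Fintype.card_fin]
  have hFinv : ∀ w : ℂ, F.eval (ω * w) = F.eval w := by
    intro w
    by_cases hw : w = 0
    · subst hw; rw [mul_zero]
    · rw [hFw _ (mul_ne_zero hω0 hw), hFw _ hw, hinv, mul_pow, hωq, one_mul]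
  have hcomp : F.comp (C ω * X) = F := by
    apply Polynomial.funext
    intro r
    rw [eval_comp, eval_mul, eval_C, eval_X, hFinv r]
  have hcoeff : ∀ n, F.coeff n ≠ 0 → q ∣ n := by
    intro n hn
    have h1 : F.coeff n * ω ^ n = F.coeff n := by
      conv_rhs => rw [← hcomp]
      rw [coeff_comp_C_mul_X]
    have h2 : ω ^ n = 1 :=
      mul_left_cancel₀ hn (by rw [mul_one]; exact h1)
    exact hprim n h2
  have hdegA : ∀ i j, (A i j).natDegree ≤ 2 := by
    intro i j
    simp only [hA, Matrix.of_apply]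
    refine le_trans (natDegree_sub_le _ _) (max_le ?_ ?_)
    · refine le_trans natDegree_mul_le ?_
      have h1 : (C t * X).natDegree ≤ 1 := le_trans natDegree_mul_le (by simp)
      have h2 : (if i = j then (1 : Polynomial ℂ) else 0).natDegree = 0 := by
        split_ifs <;> simp
      omega
    · refine le_trans (natDegree_add_le _ _) (max_le (le_trans (natDegree_add_le _ _)
        (max_le ?_ ?_)) ?_)
      · exact le_trans natDegree_mul_le (by simp)
      · simp
      · exact le_trans natDegree_mul_le (by simp)
  have hdegF : F.natDegree ≤ 2 * q := by
    have h := natDegree_det_le' A 2 hdegA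
    rw [hF]
    omega
  have htri := tri_poly hq F hdegF hcoeff
  have ha0 : F.coeff 0 = -1 := by
    rw [Polynomial.coeff_zero_eq_eval_zero, hevalF 0]
    have hmap : A.map (Polynomial.eval 0) = -Mᴴ := by
      ext i j
      simp only [hA, Matrix.map_apply, Matrix.of_apply, Matrix.neg_apply]
      rw [eval_sub, eval_mul, eval_mul, eval_C, eval_X, eval_add, eval_add, eval_mul,
        eval_pow, eval_X, eval_C, eval_C, eval_mul, eval_X, eval_C]
      split_ifs <;> ring
    rw [hmap, Matrix.det_neg, Fintype.card_fin, hdM']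
    rw [← pow_add, show q + (q + 1) = 2 * q + 1 from by omega, pow_succ, pow_mul]
    norm_num
  -- the reversed polynomial
  set A' : Matrix (Fin q) (Fin q) (Polynomial ℂ) := Matrix.of fun i j =>
    C t * X * (if i = j then 1 else 0)
      - (C (M i j) + X ^ 2 * C (Mᴴ i j) + X * C (K i j)) with hA'
  set F' := A'.det with hF'
  have hevalF' : ∀ w : ℂ, F'.eval w = (A'.map (Polynomial.eval w)).det := by
    intro w
    rw [hF', show Polynomial.eval w A'.det = (Polynomial.evalRingHom w) A'.det from rfl,
      RingHom.map_det]
    rfl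
  have hF'w : ∀ w : ℂ, w ≠ 0 → F'.eval w = w ^ q * f w⁻¹ := by
    intro w hw
    rw [hevalF']
    have hmap : A'.map (Polynomial.eval w)
        = w • (t • (1 : Matrix (Fin q) (Fin q) ℂ) - H w⁻¹) := by
      show A'.map (Polynomial.eval w)
        = w • (t • (1 : Matrix (Fin q) (Fin q) ℂ) - (w⁻¹ • M + (w⁻¹)⁻¹ • Mᴴ + K))
      ext i j
      simp only [hA', Matrix.map_apply, Matrix.of_apply, Matrix.smul_apply,
        Matrix.sub_apply, Matrix.add_apply, Matrix.one_apply, smul_eq_mul, inv_inv]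
      rw [eval_sub, eval_mul, eval_mul, eval_C, eval_X, eval_add, eval_add, eval_C,
        eval_mul, eval_pow, eval_X, eval_C, eval_mul, eval_X, eval_C]
      split_ifs with h
      · rw [eval_one]; field_simp
      · rw [eval_zero]; field_simp
    rw [hmap, Matrix.det_smul, Fintype.card_fin]
  have ha2q : F.coeff (2 * q) = -1 := by
    set G : Polynomial ℂ := C (F.coeff 0) * X ^ (2 * q) + C (F.coeff q) * X ^ q
      + C (F.coeff (2 * q)) with hG
    have hzero : F' - G = 0 := by
      apply Polynomial.eq_zero_of_infinite_isRoot
      have hinf : ({x : ℂ | x ≠ 0}).Infinite := by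
        have heq : ({x : ℂ | x ≠ 0}) = ({0} : Set ℂ)ᶜ := by ext x; simp
        rw [heq]
        exact Set.Finite.infinite_compl (Set.finite_singleton 0)
      refine hinf.mono ?_
      intro w hw
      have hw' : w ≠ 0 := hw
      simp only [Set.mem_setOf_eq, Polynomial.IsRoot, eval_sub, sub_eq_zero]
      have e1 : F.eval w⁻¹ = w⁻¹ ^ q * f w⁻¹ := hFw _ (inv_ne_zero hw')
      have e2 : F.eval w⁻¹ = F.coeff 0 + F.coeff q * (w⁻¹) ^ q
          + F.coeff (2 * q) * (w⁻¹) ^ (2 * q) := by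
        conv_lhs => rw [htri]
        simp
      have e3 : F'.eval w = w ^ q * f w⁻¹ := hF'w _ hw'
      have e4 : G.eval w = F.coeff 0 * w ^ (2 * q) + F.coeff q * w ^ q
          + F.coeff (2 * q) := by simp [hG]
      rw [e3, e4]
      have hfval : w⁻¹ ^ q * f w⁻¹ = F.coeff 0 + F.coeff q * (w⁻¹) ^ q
          + F.coeff (2 * q) * (w⁻¹) ^ (2 * q) := by rw [← e1, e2]
      have h5 : w ^ q * w⁻¹ ^ q = 1 := by
        rw [← mul_pow, mul_inv_cancel₀ hw', one_pow]
      have hfv : f w⁻¹ = w ^ q * (F.coeff 0 + F.coeff q * (w⁻¹) ^ q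
          + F.coeff (2 * q) * (w⁻¹) ^ (2 * q)) := by
        calc f w⁻¹ = (w ^ q * w⁻¹ ^ q) * f w⁻¹ := by rw [h5, one_mul]
          _ = w ^ q * (w⁻¹ ^ q * f w⁻¹) := by ring
          _ = _ := by rw [hfval]
      rw [hfv]
      linear_combination (F.coeff q * w ^ q
        + F.coeff (2 * q) * (w ^ q * w⁻¹ ^ q + 1)) * h5
    have hFG : F' = G := by
      have := sub_eq_zero.mp hzero
      exact this
    have hG0 : G.eval 0 = F.coeff (2 * q) := by
      have h2q : 2 * q ≠ 0 := by omega
      simp [hG, zero_pow hq, zero_pow h2q]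
    have hF'0 : F'.eval 0 = -1 := by
      rw [hevalF']
      have hmap : A'.map (Polynomial.eval 0) = -M := by
        ext i j
        simp only [hA', Matrix.map_apply, Matrix.of_apply, Matrix.neg_apply]
        rw [eval_sub, eval_mul, eval_mul, eval_C, eval_X, eval_add, eval_add, eval_C,
          eval_mul, eval_pow, eval_X, eval_C, eval_mul, eval_X, eval_C]
        split_ifs <;> ring
      rw [hmap, Matrix.det_neg, Fintype.card_fin, hdM]
      rw [← pow_add, show q + (q + 1) = 2 * q + 1 from by omega, pow_succ, pow_mul]
      norm_num
    rw [← hG0, ← hFG, hF'0]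
  -- conclusion
  intro z hz
  have hFz : ∀ w : ℂ, F.eval w = F.coeff 0 + F.coeff q * w ^ q
      + F.coeff (2 * q) * w ^ (2 * q) := by
    intro w
    conv_lhs => rw [htri]
    simp
  have h1 : z ^ q * f z = -1 + F.coeff q * z ^ q - z ^ (2 * q) := by
    rw [← hFw z hz, hFz, ha0, ha2q]; ring
  have hone : f 1 = F.coeff q - 2 := by
    have h1' := hFw 1 one_ne_zero
    rw [one_pow, one_mul] at h1'
    rw [← h1', hFz, ha0, ha2q]; ring
  have hgoal : f z + z ^ q + z⁻¹ ^ q = f 1 + 2 := by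
    have hzq : z ^ q ≠ 0 := pow_ne_zero _ hz
    have hzz : z ^ q * z⁻¹ ^ q = 1 := by
      rw [← mul_pow, mul_inv_cancel₀ hz, one_pow]
    apply mul_left_cancel₀ hzq
    linear_combination h1 + hzz - z ^ q * hone
  have hfz : f z = (t • (1 : Matrix (Fin q) (Fin q) ℂ) - (z • M + z⁻¹ • Mᴴ + K)).det := rfl
  have hf1 : f 1 = (t • (1 : Matrix (Fin q) (Fin q) ℂ) - (M + Mᴴ + K)).det := by
    have : H 1 = M + Mᴴ + K := by
      show (1 : ℂ) • M + (1 : ℂ)⁻¹ • Mᴴ + K = M + Mᴴ + K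
      rw [inv_one, one_smul, one_smul]
    rw [hf]
    dsimp only
    rw [this]
  rw [← hfz, ← hf1]
  exact hgoal

open Matrix Complex in
theorem stmt_13 (q : ℕ) [NeZero q] (p : ℤ) (hpq : Int.gcd p q = 1)
    (U V : Matrix (Fin q) (Fin q) ℂ)
    (hU : U = Matrix.of fun i j : Fin q => if i = j + 1 then 1 else 0)
    (hV : V = Matrix.diagonal fun k : Fin q =>
      Complex.exp (2 * Real.pi * Complex.I * p * (k : ℕ) / q)) :
    ∃ (P : Polynomial ℂ) (ε : ℂ), (ε = 1 ∨ ε = -1) ∧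
      ∀ z₁ z₂ : ℂ, ‖z₁‖ = 1 → ‖z₂‖ = 1 →
        (z₁ • U + (starRingEnd ℂ z₁) • Uᴴ + z₂ • V + (starRingEnd ℂ z₂) • Vᴴ).charpoly =
          P + Polynomial.C (ε * (z₁ ^ q + z₁⁻¹ ^ q + z₂ ^ q + z₂⁻¹ ^ q)) := by
  have hq : q ≠ 0 := NeZero.ne q
  have hqC : (q : ℂ) ≠ 0 := Nat.cast_ne_zero.mpr hq
  set ω : ℂ := Complex.exp (2 * Real.pi * Complex.I * p / q) with hω
  have hω0 : ω ≠ 0 := Complex.exp_ne_zero _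
  have hωq : ω ^ q = 1 := by
    rw [hω, ← Complex.exp_nat_mul,
      show (q : ℂ) * (2 * Real.pi * Complex.I * p / q) = p * (2 * Real.pi * Complex.I) from by
        rw [mul_comm, div_mul_cancel₀ _ hqC]; ring]
    exact Complex.exp_int_mul_two_pi_mul_I p
  have hprim : ∀ n : ℕ, ω ^ n = 1 → q ∣ n := by
    intro n h
    rw [hω, ← Complex.exp_nat_mul, Complex.exp_eq_one_iff] at h
    obtain ⟨m, hm⟩ := h
    have hπ : (Real.pi : ℂ) ≠ 0 := by
      simpa using Real.pi_ne_zero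
    have hc : (2 : ℂ) * Real.pi * Complex.I ≠ 0 := by
      simp [Real.pi_ne_zero, Complex.I_ne_zero]
    have hnp : (n : ℂ) * p = m * q := by
      field_simp at hm
      apply mul_left_cancel₀ hc
      linear_combination (2 * (Real.pi : ℂ) * Complex.I) * hm
    have hnp' : (n : ℤ) * p = m * q := by exact_mod_cast hnp
    have hdvd : (q : ℤ) ∣ (n : ℤ) * p := ⟨m, by linarith⟩
    have hcop : Int.gcd (q : ℤ) p = 1 := by rw [Int.gcd_comm]; exact hpq
    have hcop' : Int.gcd (q : ℤ) p = 1 := hcop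
    have := Int.dvd_of_dvd_mul_left_of_gcd_one hdvd hcop'
    exact_mod_cast this
  have hωmod : ∀ m : ℕ, ω ^ (m % q) = ω ^ m := by
    intro m
    conv_rhs => rw [← Nat.mod_add_div m q]
    rw [pow_add, pow_mul, hωq, one_pow, mul_one]
  have hωinv : (starRingEnd ℂ) ω = ω⁻¹ := by
    rw [hω, ← Complex.exp_conj, ← Complex.exp_neg]
    congr 1
    simp only [map_div₀, _root_.map_mul, Complex.conj_I, Complex.conj_ofReal, map_ofNat,
      map_intCast, map_natCast]
    ring
  set d : Fin q → ℂ := fun k => ω ^ (k : ℕ) with hd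
  have hd0 : ∀ k, d k ≠ 0 := fun k => pow_ne_zero _ hω0
  have hstar_d : ∀ k, star (d k) = (d k)⁻¹ := by
    intro k
    show star (ω ^ (k : ℕ)) = (ω ^ (k : ℕ))⁻¹
    rw [star_pow, show star ω = ω⁻¹ from hωinv, inv_pow]
  have hVω : V = Matrix.diagonal d := by
    rw [hV]
    refine congrArg Matrix.diagonal (funext fun k => ?_)
    show Complex.exp (2 * Real.pi * Complex.I * p * (k : ℕ) / q) = ω ^ (k : ℕ)
    rw [hω, ← Complex.exp_nat_mul]
    congr 1
    ring
  have hshift : ∀ k : Fin q, d (k + 1) = ω * d k := by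
    intro k
    show ω ^ ((k + 1 : Fin q) : ℕ) = ω * ω ^ (k : ℕ)
    rw [Fin.val_add, Fin.val_one', hωmod, pow_add, hωmod 1, pow_one]
    ring
  -- U multiplication helpers
  have hleft : ∀ (B : Matrix (Fin q) (Fin q) ℂ) (i j : Fin q), (Uᴴ * B) i j = B (i + 1) j := by
    intro B i j
    rw [hU]
    simp only [Matrix.mul_apply, Matrix.conjTranspose_apply, Matrix.of_apply]
    simp [apply_ite (starRingEnd ℂ), Finset.sum_ite_eq']
  have hright : ∀ (B : Matrix (Fin q) (Fin q) ℂ) (i j : Fin q), (B * U) i j = B i (j + 1) := by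
    intro B i j
    rw [hU]
    simp only [Matrix.mul_apply, Matrix.of_apply]
    simp [mul_ite, Finset.sum_ite_eq']
  have hUU' : Uᴴ * U = 1 := by
    ext i j
    rw [hleft]
    rw [hU]
    simp [Matrix.one_apply, add_left_inj, eq_comm]
  have hUU : U * Uᴴ = 1 := mul_eq_one_comm.mp hUU'
  have hVV : V * Vᴴ = 1 := by
    rw [hVω, Matrix.diagonal_conjTranspose, Matrix.diagonal_mul_diagonal]
    ext i j
    simp only [Matrix.diagonal_apply, Matrix.one_apply, Pi.mul_apply, Pi.star_apply]
    split_ifs with h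
    · rw [hstar_d]
      exact mul_inv_cancel₀ (hd0 _)
    · rfl
  -- conjugation identities
  have hUVU : Uᴴ * V * U = ω • V := by
    ext i j
    rw [hright, hleft, hVω]
    simp only [Matrix.diagonal_apply, Matrix.smul_apply, smul_eq_mul]
    by_cases h : i = j
    · subst h
      rw [if_pos rfl, if_pos rfl, hshift]
    · rw [if_neg (by intro hc; exact h (add_right_cancel hc)), if_neg h, mul_zero]
  have hUV'U : Uᴴ * Vᴴ * U = ω⁻¹ • Vᴴ := by
    have h := congrArg Matrix.conjTranspose hUVU
    simp only [Matrix.conjTranspose_mul, Matrix.conjTranspose_conjTranspose,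
      Matrix.conjTranspose_smul] at h
    calc Uᴴ * Vᴴ * U = Uᴴ * (Vᴴ * U) := by rw [Matrix.mul_assoc]
      _ = star ω • Vᴴ := h
      _ = ω⁻¹ • Vᴴ := by rw [show star ω = (starRingEnd ℂ) ω from rfl, hωinv]
  have hVUV : V * U * Vᴴ = ω • U := by
    rw [hVω, Matrix.diagonal_conjTranspose]
    ext i j
    rw [Matrix.mul_diagonal, Matrix.diagonal_mul]
    rw [hU]
    simp only [Matrix.of_apply, Matrix.smul_apply, smul_eq_mul, Pi.star_apply]
    by_cases h : i = j + 1
    · subst h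
      rw [hshift, hstar_d]
      simp [mul_assoc, mul_inv_cancel₀ (hd0 j)]
    · simp [h]
  have hVU'V : V * Uᴴ * Vᴴ = ω⁻¹ • Uᴴ := by
    have h := congrArg Matrix.conjTranspose hVUV
    simp only [Matrix.conjTranspose_mul, Matrix.conjTranspose_conjTranspose,
      Matrix.conjTranspose_smul] at h
    calc V * Uᴴ * Vᴴ = V * (Uᴴ * Vᴴ) := by rw [Matrix.mul_assoc]
      _ = star ω • Uᴴ := h
      _ = ω⁻¹ • Uᴴ := by rw [show star ω = (starRingEnd ℂ) ω from rfl, hωinv]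
  -- commutation with K
  have hKV : ∀ a b : ℂ, V * (a • V + b • Vᴴ) * Vᴴ = a • V + b • Vᴴ := by
    intro a b
    have hVVV : V * V * Vᴴ = V := by rw [Matrix.mul_assoc, hVV, Matrix.mul_one]
    have hVV'V' : V * Vᴴ * Vᴴ = Vᴴ := by rw [hVV, Matrix.one_mul]
    calc V * (a • V + b • Vᴴ) * Vᴴ
        = a • (V * V * Vᴴ) + b • (V * Vᴴ * Vᴴ) := by
          rw [mul_add, add_mul, mul_smul_comm, mul_smul_comm, smul_mul_assoc, smul_mul_assoc]
      _ = a • V + b • Vᴴ := by rw [hVVV, hVV'V']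
  have hKU : Uᴴ * (U + Uᴴ) * U = U + Uᴴ := by
    have h1 : Uᴴ * U * U = U := by rw [hUU', Matrix.one_mul]
    have h2 : Uᴴ * Uᴴ * U = Uᴴ := by rw [Matrix.mul_assoc, hUU', Matrix.mul_one]
    rw [mul_add, add_mul, h1, h2]
  -- determinants
  have hdetU : U.det = (-1 : ℂ) ^ (q + 1) := by
    obtain ⟨n, hn⟩ : ∃ n, q = n + 1 := ⟨q - 1, by omega⟩
    subst hn
    have hUperm : U = ((finRotate (n + 1))⁻¹ : Equiv.Perm (Fin (n + 1))).permMatrix ℂ := by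
      rw [hU]
      ext i j
      simp only [Matrix.of_apply, Equiv.Perm.permMatrix, PEquiv.toMatrix_apply,
        Equiv.toPEquiv_apply, Option.mem_def, Option.some.injEq]
      have hiff : ((finRotate (n + 1))⁻¹ i = j) ↔ (i = j + 1) := by
        rw [eq_comm, Equiv.Perm.eq_inv_iff_eq, finRotate_succ_apply, eq_comm]
      simp only [hiff]
    rw [hUperm, Matrix.det_permutation, Equiv.Perm.sign_inv, sign_finRotate]
    push_cast
    rw [show n + 1 + 1 = n + 2 from rfl, pow_add]
    norm_num
  have hdetU' : Uᴴ.det = (-1 : ℂ) ^ (q + 1) := by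
    rw [Matrix.det_conjTranspose, hdetU]
    simp
  have hpodd_of_even : Even q → Odd p := by
    intro hqe
    rcases Int.even_or_odd p with hpe | hpo
    · exfalso
      have h2p : (2 : ℤ) ∣ p := hpe.two_dvd
      have h2q : (2 : ℤ) ∣ (q : ℤ) := by
        obtain ⟨r, hr⟩ := hqe
        exact ⟨r, by push_cast [hr]; ring⟩
      have hg := Int.dvd_gcd h2p h2q
      rw [hpq] at hg
      norm_num at hg
    · exact hpo
  have hsum : ∑ k : Fin q, (k : ℕ) = q * (q - 1) / 2 := by
    rw [Fin.sum_univ_eq_sum_range (fun i => i) q, Finset.sum_range_id]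
  have hdetV : V.det = (-1 : ℂ) ^ (q + 1) := by
    rw [hVω, Matrix.det_diagonal]
    rw [hd]
    rw [Finset.prod_pow_eq_pow_sum, hsum]
    rcases Nat.even_or_odd q with hqe | hqo
    · obtain ⟨r, hr⟩ := hqe
      have hr0 : r ≠ 0 := by omega
      have hrC : (r : ℂ) ≠ 0 := Nat.cast_ne_zero.mpr hr0
      have hm : q * (q - 1) / 2 = r * (q - 1) := by
        have h1 : q * (q - 1) = 2 * (r * (q - 1)) := by rw [hr]; ring
        omega
      rw [hm, hω, ← Complex.exp_nat_mul]
      have harg : ((r * (q - 1) : ℕ) : ℂ) * (2 * Real.pi * Complex.I * p / q)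
          = ((((q : ℤ) - 1) * p : ℤ) : ℂ) * (Real.pi * Complex.I) := by
        have hq2 : (q : ℂ) = 2 * r := by rw [hr]; push_cast; ring
        have hq1 : (1 : ℕ) ≤ q := by omega
        push_cast [hq1]
        rw [hq2]
        field_simp
      rw [harg, Complex.exp_int_mul, Complex.exp_pi_mul_I]
      have hodd : Odd (((q : ℤ) - 1) * p) := by
        refine Odd.mul ?_ (hpodd_of_even ⟨r, hr⟩)
        have : Even (q : ℤ) := ⟨r, by push_cast [hr]; ring⟩
        exact this.sub_odd odd_one
      rw [Odd.neg_one_zpow hodd]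
      have : Odd (q + 1) := by
        obtain ⟨r', hr'⟩ := (⟨r, hr⟩ : Even q)
        exact ⟨r', by omega⟩
      rw [Odd.neg_one_pow this]
    · obtain ⟨s, hs⟩ := hqo
      have hm : q * (q - 1) / 2 = q * s := by
        have h1 : q * (q - 1) = 2 * (q * s) := by
          rw [show q - 1 = 2 * s from by omega]
          ring
        omega
      rw [hm, pow_mul, hωq, one_pow]
      have : Even (q + 1) := ⟨s + 1, by omega⟩
      rw [Even.neg_one_pow this]
  have hdetV' : Vᴴ.det = (-1 : ℂ) ^ (q + 1) := by
    rw [Matrix.det_conjTranspose, hdetV]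
    simp
  -- conclusion
  refine ⟨(U + Uᴴ + V + Vᴴ).charpoly + Polynomial.C 4, -1, Or.inr rfl, ?_⟩
  intro z₁ z₂ hz₁ hz₂
  have hz₁0 : z₁ ≠ 0 := by intro h; rw [h] at hz₁; simp at hz₁
  have hz₂0 : z₂ ≠ 0 := by intro h; rw [h] at hz₂; simp at hz₂
  rw [show (starRingEnd ℂ) z₁ = z₁⁻¹ from (RCLike.inv_eq_conj hz₁).symm,
    show (starRingEnd ℂ) z₂ = z₂⁻¹ from (RCLike.inv_eq_conj hz₂).symm]
  apply Polynomial.funext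
  intro t
  rw [Polynomial.eval_add, Polynomial.eval_add, Polynomial.eval_C, Polynomial.eval_C,
    charpoly_eval', charpoly_eval']
  have h1 := key_lemma hq ω hωq hprim U (z₂ • V + z₂⁻¹ • Vᴴ) V Vᴴ hVV hVUV hVU'V
    (hKV z₂ z₂⁻¹) hdetU hdetU' t z₁ hz₁0
  have h2 := key_lemma hq ω hωq hprim V (U + Uᴴ) Uᴴ U hUU' hUVU hUV'U hKU hdetV hdetV' t z₂ hz₂0
  have e1 : z₁ • U + z₁⁻¹ • Uᴴ + z₂ • V + z₂⁻¹ • Vᴴ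
      = z₁ • U + z₁⁻¹ • Uᴴ + (z₂ • V + z₂⁻¹ • Vᴴ) := by rw [add_assoc]
  have e2 : U + Uᴴ + (z₂ • V + z₂⁻¹ • Vᴴ) = z₂ • V + z₂⁻¹ • Vᴴ + (U + Uᴴ) := by abel
  have e3 : V + Vᴴ + (U + Uᴴ) = U + Uᴴ + V + Vᴴ := by abel
  rw [e1]
  rw [e2] at h1
  rw [e3] at h2
  linear_combination h1 + h2
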